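/- Define s₀, s₁ : [0,1] → [0,1] by s₀(x) = 1 − √(1−x) and s₁(x) = √x, and for ω ∈ Ω and n ≥ 1 let ψ_{ω_n} := s_{ω(n)} ∘ ⋯ ∘ s_{ω(1)}. Then for every z ∈ (0,1), the law of the random variable ω ↦ ψ_{ω_n}(z) under μ converges weakly, as n → ∞, to the uniform distribution on [0,1]. -/

import Mathlib

open MeasureTheory Filter Topology

/-- `s₀(x) = 1 - √(1-x)` and `s₁(x) = √x`, the inverses of the BEC polar maps
`t₀(x) = 2x - x²` and `t₁(x) = x²`. -/
noncomputable def becS (b : Bool) (x : ℝ) : ℝ :=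
  if b then Real.sqrt x else 1 - Real.sqrt (1 - x)

/-- `psi z n ω = ψ_{ω_n}(z) = s_{ω(n)} ∘ ⋯ ∘ s_{ω(1)} (z)`. -/
noncomputable def psi (z : ℝ) : ℕ → (ℕ → Bool) → ℝ
  | 0, _ => z
  | n + 1, ω => becS (ω n) (psi z n ω)

/-- `μ` is the i.i.d. Bernoulli(1/2) product measure on `{0,1}^ℕ`,
characterized by its values on cylinder sets. -/
def IsBernoulliHalf (μ : Measure (ℕ → Bool)) : Prop :=
  ∀ (n : ℕ) (b : Fin n → Bool), μ {ω | ∀ i : Fin n, ω i = b i} = (2 : ENNReal)⁻¹ ^ n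

/-! ### Auxiliary definitions -/

/-- Finitary version of `psi`, depending only on `n` bits. -/
noncomputable def psiF (z : ℝ) : (n : ℕ) → (Fin n → Bool) → ℝ
  | 0, _ => z
  | n + 1, b => becS (b (Fin.last n)) (psiF z n (fun i => b i.castSucc))

/-- The BEC polar maps `t₁(u) = u²`, `t₀(u) = 2u - u²`. -/
noncomputable def tmap (b : Bool) (u : ℝ) : ℝ := if b then u ^ 2 else 2 * u - u ^ 2

/-- Iterates of the averaging operator `Qφ(u) = (φ(t₀ u) + φ(t₁ u))/2`. -/
noncomputable def Qit : ℕ → (ℝ → ℝ) → ℝ → ℝ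
  | 0 => fun φ => φ
  | n + 1 => fun φ u => (Qit n φ (tmap false u) + Qit n φ (tmap true u)) / 2

@[simp] lemma Qit_zero (φ : ℝ → ℝ) (u : ℝ) : Qit 0 φ u = φ u := rfl

lemma Qit_succ (n : ℕ) (φ : ℝ → ℝ) (u : ℝ) :
    Qit (n + 1) φ u = (Qit n φ (tmap false u) + Qit n φ (tmap true u)) / 2 := rfl

/-- Splitting off the last bit of `Fin (n+1) → Bool`. -/
def snocEquiv (n : ℕ) : (Fin (n+1) → Bool) ≃ Bool × (Fin n → Bool) where
  toFun b := (b (Fin.last n), fun i => b i.castSucc)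
  invFun p := Fin.snoc p.2 p.1
  left_inv b := by
    funext i
    refine Fin.lastCases ?_ ?_ i
    · simp
    · intro j; simp
  right_inv p := by simp

/-- The finite empirical average `2^{-n} ∑_b f (ψ_b(z))`. -/
noncomputable def Aav (z : ℝ) (f : ℝ → ℝ) (n : ℕ) : ℝ :=
  (∑ b : Fin n → Bool, f (psiF z n b)) / 2 ^ n

/-! ### Basic lemmas -/

lemma becS_mem {x : ℝ} (hx : x ∈ Set.Icc (0:ℝ) 1) (b : Bool) :
    becS b x ∈ Set.Icc (0:ℝ) 1 := by
  obtain ⟨h0, h1⟩ := hx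
  cases b <;> simp only [becS, if_true, if_false, Bool.false_eq_true]
  · constructor
    · have : Real.sqrt (1 - x) ≤ 1 := Real.sqrt_le_one.mpr (by linarith)
      linarith
    · have : 0 ≤ Real.sqrt (1 - x) := Real.sqrt_nonneg _
      linarith
  · exact ⟨Real.sqrt_nonneg _, Real.sqrt_le_one.mpr h1⟩

lemma psiF_mem {z : ℝ} (hz : z ∈ Set.Icc (0:ℝ) 1) :
    ∀ (n : ℕ) (b : Fin n → Bool), psiF z n b ∈ Set.Icc (0:ℝ) 1 := by
  intro n
  induction n with
  | zero => intro b; exact hz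
  | succ n ih => intro b; exact becS_mem (ih _) _

lemma psi_eq_psiF (z : ℝ) : ∀ (n : ℕ) (ω : ℕ → Bool),
    psi z n ω = psiF z n (fun i => ω i) := by
  intro n
  induction n with
  | zero => intro ω; rfl
  | succ n ih =>
    intro ω
    show becS (ω n) (psi z n ω) = becS _ (psiF z n _)
    rw [ih ω]
    rfl

lemma tmap_mem {u : ℝ} (hu : u ∈ Set.Icc (0:ℝ) 1) (b : Bool) :
    tmap b u ∈ Set.Icc (0:ℝ) 1 := by
  obtain ⟨h0, h1⟩ := hu
  cases b <;> simp only [tmap, if_true, if_false, Bool.false_eq_true]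
  · constructor <;> nlinarith
  · constructor <;> nlinarith

lemma becS_le_iff {x u : ℝ} (hx : x ∈ Set.Icc (0:ℝ) 1) (hu : u ∈ Set.Icc (0:ℝ) 1)
    (b : Bool) : becS b x ≤ u ↔ x ≤ tmap b u := by
  obtain ⟨hx0, hx1⟩ := hx
  obtain ⟨hu0, hu1⟩ := hu
  cases b <;> simp only [becS, tmap, if_true, if_false, Bool.false_eq_true]
  · constructor
    · intro h
      have h2 : 1 - u ≤ Real.sqrt (1 - x) := by linarith
      have := Real.sq_sqrt (show (0:ℝ) ≤ 1 - x by linarith)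
      nlinarith [Real.sqrt_nonneg (1 - x)]
    · intro h
      have h2 : (1 - u) ^ 2 ≤ 1 - x := by nlinarith
      have h3 : Real.sqrt ((1-u)^2) ≤ Real.sqrt (1 - x) := Real.sqrt_le_sqrt h2
      rw [Real.sqrt_sq (by linarith)] at h3
      linarith
  · constructor
    · intro h
      have := Real.sq_sqrt hx0
      nlinarith [Real.sqrt_nonneg x]
    · intro h
      have h3 : Real.sqrt x ≤ Real.sqrt (u ^ 2) := Real.sqrt_le_sqrt h
      rwa [Real.sqrt_sq hu0] at h3

/-! ### `Aav` lemmas -/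

lemma Aav_congr {z : ℝ} (hz : z ∈ Set.Icc (0:ℝ) 1) {f g : ℝ → ℝ}
    (h : ∀ x ∈ Set.Icc (0:ℝ) 1, f x = g x) (n : ℕ) : Aav z f n = Aav z g n := by
  unfold Aav
  congr 1
  exact Finset.sum_congr rfl fun b _ => h _ (psiF_mem hz n b)

lemma Aav_add (z : ℝ) (f g : ℝ → ℝ) (n : ℕ) :
    Aav z (fun x => f x + g x) n = Aav z f n + Aav z g n := by
  unfold Aav; rw [Finset.sum_add_distrib]; ring

lemma Aav_const (z : ℝ) (c : ℝ) (n : ℕ) : Aav z (fun _ => c) n = c := by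
  unfold Aav
  rw [Finset.sum_const, Finset.card_univ]
  have : (Fintype.card (Fin n → Bool) : ℝ) = 2 ^ n := by
    simp [Fintype.card_fun]
  rw [nsmul_eq_mul, this]
  field_simp

lemma Aav_mul (z : ℝ) (c : ℝ) (f : ℝ → ℝ) (n : ℕ) :
    Aav z (fun x => c * f x) n = c * Aav z f n := by
  unfold Aav; rw [← Finset.mul_sum]; ring

lemma Aav_sub (z : ℝ) (f g : ℝ → ℝ) (n : ℕ) :
    Aav z (fun x => f x - g x) n = Aav z f n - Aav z g n := by
  unfold Aav; rw [Finset.sum_sub_distrib]; ring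

lemma Aav_finset_sum {ι : Type*} (s : Finset ι) (z : ℝ) (F : ι → ℝ → ℝ) (n : ℕ) :
    Aav z (fun x => ∑ i ∈ s, F i x) n = ∑ i ∈ s, Aav z (F i) n := by
  unfold Aav
  rw [Finset.sum_comm, ← Finset.sum_div]

lemma Aav_abs_le {z : ℝ} (hz : z ∈ Set.Icc (0:ℝ) 1) {f : ℝ → ℝ} {B : ℝ}
    (hB : ∀ x ∈ Set.Icc (0:ℝ) 1, |f x| ≤ B) (n : ℕ) : |Aav z f n| ≤ B := by
  unfold Aav
  rw [abs_div, abs_of_pos (show (0:ℝ) < 2 ^ n by positivity)]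
  rw [div_le_iff₀ (by positivity)]
  calc |∑ b : Fin n → Bool, f (psiF z n b)| ≤ ∑ b : Fin n → Bool, |f (psiF z n b)| :=
        Finset.abs_sum_le_sum_abs _ _
    _ ≤ ∑ _b : Fin n → Bool, B := Finset.sum_le_sum fun b _ => hB _ (psiF_mem hz n b)
    _ = B * 2 ^ n := by
        rw [Finset.sum_const, Finset.card_univ, nsmul_eq_mul]
        have : (Fintype.card (Fin n → Bool) : ℝ) = 2 ^ n := by simp [Fintype.card_fun]
        rw [this]; ring

/-- The crucial recursion for `Aav`, splitting off the last bit. -/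
lemma Aav_succ (z : ℝ) (f : ℝ → ℝ) (n : ℕ) :
    Aav z f (n + 1) =
      (Aav z (fun x => f (becS false x)) n + Aav z (fun x => f (becS true x)) n) / 2 := by
  unfold Aav
  have key : ∑ b : Fin (n+1) → Bool, f (psiF z (n+1) b)
      = ∑ p : Bool × (Fin n → Bool), f (becS p.1 (psiF z n p.2)) :=
    Fintype.sum_equiv (snocEquiv n) _ _ (fun b => rfl)
  rw [key, Fintype.sum_prod_type, Fintype.sum_bool]
  have h1 : ∀ (c : Bool), ∑ b : Fin n → Bool, f (becS c (psiF z n b))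
      = (∑ b : Fin n → Bool, (fun x => f (becS c x)) (psiF z n b)) := fun _ => rfl
  rw [h1 true, h1 false]
  field_simp
  ring

/-! ### `Qit` lemmas -/

lemma Qit_succ' (n : ℕ) (φ : ℝ → ℝ) :
    Qit (n + 1) φ = Qit n (fun u => (φ (tmap false u) + φ (tmap true u)) / 2) := by
  induction n with
  | zero => rfl
  | succ n ih =>
    funext u
    rw [Qit_succ, ih]
    rfl

lemma Qit_add (n : ℕ) (φ ψ : ℝ → ℝ) (u : ℝ) :
    Qit n (fun x => φ x + ψ x) u = Qit n φ u + Qit n ψ u := by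
  induction n generalizing u with
  | zero => rfl
  | succ n ih => rw [Qit_succ, Qit_succ, Qit_succ, ih, ih]; ring

lemma Qit_le {φ ψ : ℝ → ℝ} (h : ∀ x ∈ Set.Icc (0:ℝ) 1, φ x ≤ ψ x) :
    ∀ n, ∀ u ∈ Set.Icc (0:ℝ) 1, Qit n φ u ≤ Qit n ψ u := by
  intro n
  induction n with
  | zero => exact h
  | succ n ih =>
    intro u hu
    have h0 := ih _ (tmap_mem hu false)
    have h1 := ih _ (tmap_mem hu true)
    rw [Qit_succ, Qit_succ]
    linarith

lemma Qit_const (c : ℝ) : ∀ n u, Qit n (fun _ => c) u = c := by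
  intro n
  induction n with
  | zero => intro u; rfl
  | succ n ih => intro u; rw [Qit_succ, ih, ih]; ring

lemma Qit_mul (c : ℝ) (φ : ℝ → ℝ) : ∀ n u, Qit n (fun x => c * φ x) u = c * Qit n φ u := by
  intro n
  induction n with
  | zero => intro u; rfl
  | succ n ih => intro u; rw [Qit_succ, Qit_succ, ih, ih]; ring

lemma Qit_id : ∀ n (u : ℝ), Qit n (fun x => x) u = u := by
  intro n
  induction n with
  | zero => intro u; rfl
  | succ n ih =>
    intro u
    rw [Qit_succ, ih, ih]
    simp only [tmap, if_true, if_false, Bool.false_eq_true]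
    ring

lemma Qit_abs_le (φ : ℝ → ℝ) : ∀ n u, |Qit n φ u| ≤ Qit n (fun x => |φ x|) u := by
  intro n
  induction n with
  | zero => intro u; exact le_refl _
  | succ n ih =>
    intro u
    rw [Qit_succ, Qit_succ, abs_div, abs_of_pos (show (0:ℝ) < 2 by norm_num)]
    have := abs_add_le (Qit n φ (tmap false u)) (Qit n φ (tmap true u))
    have h0 := ih (tmap false u)
    have h1 := ih (tmap true u)
    linarith

lemma tmap_measurable (b : Bool) : Measurable (tmap b) := by
  have h0 : tmap false = fun u : ℝ => 2 * u - u ^ 2 := by funext u; simp [tmap]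
  have h1 : tmap true = fun u : ℝ => u ^ 2 := by funext u; simp [tmap]
  cases b
  · rw [h0]; fun_prop
  · rw [h1]; fun_prop

lemma Qit_measurable {φ : ℝ → ℝ} (hφ : Measurable φ) (n : ℕ) :
    Measurable (Qit n φ) := by
  induction n with
  | zero => exact hφ
  | succ n ih =>
    have : Qit (n+1) φ = fun u => (Qit n φ (tmap false u) + Qit n φ (tmap true u)) / 2 := rfl
    rw [this]
    exact ((ih.comp (tmap_measurable false)).add (ih.comp (tmap_measurable true))).div_const 2

/-- Key telescoping: `Q(x²) = x² + (x(1-x))²`. -/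
lemma Qit_sq_succ (n : ℕ) (u : ℝ) :
    Qit (n + 1) (fun x => x ^ 2) u
      = Qit n (fun x => x ^ 2) u + Qit n (fun x => (x * (1 - x)) ^ 2) u := by
  rw [Qit_succ']
  have : (fun u : ℝ => ((tmap false u) ^ 2 + (tmap true u) ^ 2) / 2)
      = fun x : ℝ => x ^ 2 + (x * (1 - x)) ^ 2 := by
    funext x; simp only [tmap, if_true, if_false, Bool.false_eq_true]; ring
  rw [this, Qit_add]

/-- The variance-type terms tend to zero. -/
lemma Qit_v_tendsto {u : ℝ} (hu : u ∈ Set.Icc (0:ℝ) 1) :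
    Tendsto (fun n => Qit n (fun x => (x * (1 - x)) ^ 2) u) atTop (nhds 0) := by
  apply Summable.tendsto_atTop_zero
  apply summable_of_sum_range_le (c := 1)
  · intro n
    have h := Qit_le (φ := fun _ => (0:ℝ)) (ψ := fun x => (x * (1 - x)) ^ 2)
      (fun x _ => sq_nonneg _) n u hu
    rwa [Qit_const] at h
  · intro n
    have htel : ∀ m, ∑ k ∈ Finset.range m, Qit k (fun x => (x * (1 - x)) ^ 2) u
        = Qit m (fun x => x ^ 2) u - u ^ 2 := by
      intro m
      induction m with
      | zero => simp
      | succ m ih => rw [Finset.sum_range_succ, ih, Qit_sq_succ]; ring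
    rw [htel]
    have hle : Qit n (fun x => x ^ 2) u ≤ 1 := by
      have h1 : ∀ x ∈ Set.Icc (0:ℝ) 1, x ^ 2 ≤ (1:ℝ) := by
        intro x hx; nlinarith [hx.1, hx.2]
      have := Qit_le h1 n u hu
      rwa [Qit_const] at this
    nlinarith [sq_nonneg u]

/-! ### The CDF convergence -/

/-- `hind z x = 1_{z ≤ x}`. -/
noncomputable def hind (z : ℝ) (x : ℝ) : ℝ := if z ≤ x then 1 else 0

lemma hind_measurable (z : ℝ) : Measurable (hind z) := by
  unfold hind
  exact Measurable.ite measurableSet_Ici measurable_const measurable_const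

lemma Qit_hind_tendsto {z : ℝ} (hz : z ∈ Set.Ioo (0:ℝ) 1) {u : ℝ}
    (hu : u ∈ Set.Icc (0:ℝ) 1) :
    Tendsto (fun n => Qit n (hind z) u) atTop (nhds u) := by
  obtain ⟨hz0, hz1⟩ := hz
  -- reduce to showing `Qit n d u → 0` where `d x = |hind z x - x|`
  set d : ℝ → ℝ := fun x => |hind z x - x| with hd
  have hkey : ∀ n, |Qit n (hind z) u - u| ≤ Qit n d u := by
    intro n
    have h1 : Qit n (fun x => (hind z x - x) + x) u
        = Qit n (fun x => hind z x - x) u + Qit n (fun x => x) u := Qit_add n _ _ u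
    simp only [sub_add_cancel, Qit_id] at h1
    have h2 : Qit n (hind z) u - u = Qit n (fun x => hind z x - x) u := by linarith
    rw [h2]
    exact Qit_abs_le _ n u
  have hd_tendsto : Tendsto (fun n => Qit n d u) atTop (nhds 0) := by
    rw [NormedAddCommGroup.tendsto_nhds_zero]
    intro ε hε
    set θ : ℝ := min (ε/2) (min z (1-z) / 2) with hθdef
    have hθpos : 0 < θ := by
      apply lt_min (by linarith)
      apply div_pos (lt_min hz0 (by linarith)) (by norm_num)
    have hθz : θ < z := by
      calc θ ≤ min z (1-z) / 2 := min_le_right _ _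
        _ ≤ z / 2 := by apply div_le_div_of_nonneg_right ?_ (by norm_num); exact min_le_left _ _
        _ < z := by linarith
    have hθz' : z < 1 - θ := by
      have : θ ≤ (1-z)/2 := le_trans (min_le_right _ _)
        (by apply div_le_div_of_nonneg_right ?_ (by norm_num); exact min_le_right _ _)
      linarith
    have hθhalf : θ < 1/2 := by
      have h1 : θ < z := hθz
      have h2 : z < 1 - θ := hθz'
      linarith
    set c : ℝ := (θ * (1-θ)) ^ 2 with hc
    have hcpos : 0 < c := by
      have h1 : 0 < θ * (1-θ) := mul_pos hθpos (by linarith)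
      positivity
    -- pointwise bound `d x ≤ θ + (x(1-x))²/c` on `[0,1]`
    have hbound : ∀ x ∈ Set.Icc (0:ℝ) 1, d x ≤ θ + (x * (1-x)) ^ 2 / c := by
      intro x hx
      obtain ⟨hx0, hx1⟩ := hx
      rcases le_or_gt x θ with h | h
      · have hxz : ¬ (z ≤ x) := by linarith
        have : d x = x := by
          simp only [hd, hind, if_neg hxz]
          rw [abs_of_nonpos (by linarith)]; ring
        rw [this]
        have : (0:ℝ) ≤ (x * (1-x))^2 / c := by positivity
        linarith
      · rcases le_or_gt (1-θ) x with h' | h'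
        · have hxz : z ≤ x := by linarith
          have : d x = 1 - x := by
            simp only [hd, hind, if_pos hxz]
            rw [abs_of_nonneg (by linarith)]
          rw [this]
          have : (0:ℝ) ≤ (x * (1-x))^2 / c := by positivity
          linarith
        · -- middle region: d x ≤ 1 ≤ (x(1-x))²/c
          have hdle : d x ≤ 1 := by
            simp only [hd, hind]
            split
            · rw [abs_of_nonneg (by linarith)]; linarith
            · rw [abs_of_nonpos (by linarith)]; linarith
          have hmid : θ * (1-θ) ≤ x * (1-x) := by nlinarith
          have hcx : c ≤ (x * (1-x))^2 := by
            have h1 : 0 ≤ θ * (1-θ) := by nlinarith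
            nlinarith
          have : (1:ℝ) ≤ (x * (1-x))^2 / c := by
            rw [le_div_iff₀ hcpos]; linarith
          linarith
    have hmono : ∀ n, Qit n d u ≤ θ + c⁻¹ * Qit n (fun x => (x * (1-x))^2) u := by
      intro n
      have h1 := Qit_le hbound n u hu
      have h2 : Qit n (fun x => θ + c⁻¹ * (x * (1-x))^2) u
          = θ + c⁻¹ * Qit n (fun x => (x * (1-x))^2) u := by
        rw [show (fun x : ℝ => θ + c⁻¹ * (x * (1-x))^2)
            = fun x : ℝ => (fun _ => θ) x + (fun y => c⁻¹ * (y * (1-y))^2) x from rfl,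
          Qit_add, Qit_const, Qit_mul]
      have h3 : ∀ x ∈ Set.Icc (0:ℝ) 1, d x ≤ θ + c⁻¹ * (x * (1-x))^2 := by
        intro x hx
        have := hbound x hx
        rw [div_eq_inv_mul] at this
        exact this
      have := Qit_le h3 n u hu
      rwa [h2] at this
    have hnn : ∀ n, 0 ≤ Qit n d u := by
      intro n
      have h0 : ∀ x ∈ Set.Icc (0:ℝ) 1, (fun _ : ℝ => (0:ℝ)) x ≤ d x := fun x _ => abs_nonneg _
      have := Qit_le h0 n u hu
      rwa [Qit_const] at this
    have hv := Qit_v_tendsto hu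
    rw [NormedAddCommGroup.tendsto_nhds_zero] at hv
    filter_upwards [hv ((ε/2) * c) (mul_pos (by linarith) hcpos)] with n hn
    have hv' : Qit n (fun x => (x * (1-x))^2) u < (ε/2) * c := by
      have := hn
      rwa [Real.norm_eq_abs, abs_of_nonneg ?_] at this
      have h0 : ∀ x ∈ Set.Icc (0:ℝ) 1, (fun _ : ℝ => (0:ℝ)) x ≤ (x * (1-x))^2 :=
        fun x _ => sq_nonneg _
      have := Qit_le h0 n u hu
      rwa [Qit_const] at this
    have : Qit n d u < ε := by
      have h1 := hmono n
      have h2 : c⁻¹ * Qit n (fun x => (x * (1-x))^2) u < c⁻¹ * ((ε/2) * c) := by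
        exact mul_lt_mul_of_pos_left hv' (inv_pos.mpr hcpos)
      have h3 : c⁻¹ * ((ε/2) * c) = ε/2 := by field_simp
      have h4 : θ ≤ ε/2 := min_le_left _ _
      linarith
    rwa [Real.norm_eq_abs, abs_of_nonneg (hnn n)]
  have : Tendsto (fun n => Qit n (hind z) u - u) atTop (nhds 0) :=
    squeeze_zero_norm hkey hd_tendsto
  have := this.add_const u
  simpa using this

/-! ### Bridge between `Aav` and `Qit` -/

lemma Aav_ind_eq_Qit {z : ℝ} (hz : z ∈ Set.Icc (0:ℝ) 1) :
    ∀ n, ∀ u ∈ Set.Icc (0:ℝ) 1,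
      Aav z (fun x => if x ≤ u then 1 else 0) n = Qit n (hind z) u := by
  intro n
  induction n with
  | zero =>
    intro u hu
    unfold Aav
    by_cases hzu : z ≤ u <;> simp [hind, psiF, hzu]
  | succ n ih =>
    intro u hu
    rw [Aav_succ, Qit_succ]
    have h0 : Aav z (fun x => if becS false x ≤ u then (1:ℝ) else 0) n
        = Qit n (hind z) (tmap false u) := by
      rw [Aav_congr hz (g := fun x => if x ≤ tmap false u then (1:ℝ) else 0)
        (fun x hx => by rw [if_congr (becS_le_iff hx hu false) rfl rfl])]
      exact ih _ (tmap_mem hu false)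
    have h1 : Aav z (fun x => if becS true x ≤ u then (1:ℝ) else 0) n
        = Qit n (hind z) (tmap true u) := by
      rw [Aav_congr hz (g := fun x => if x ≤ tmap true u then (1:ℝ) else 0)
        (fun x hx => by rw [if_congr (becS_le_iff hx hu true) rfl rfl])]
      exact ih _ (tmap_mem hu true)
    rw [h0, h1]

/-! ### Moments -/

lemma Aav_pow_tendsto {z : ℝ} (hz : z ∈ Set.Ioo (0:ℝ) 1) (m : ℕ) :
    Tendsto (fun n => Aav z (fun x => x ^ m) n) atTop
      (nhds (∫ x in Set.Icc (0:ℝ) 1, x ^ m)) := by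
  have hzI : z ∈ Set.Icc (0:ℝ) 1 := ⟨hz.1.le, hz.2.le⟩
  cases m with
  | zero =>
    have h2 : (∫ x in Set.Icc (0:ℝ) 1, x ^ 0) = 1 := by
      simp [Real.volume_Icc]
    rw [h2]
    have h1 : (fun n => Aav z (fun x => x ^ 0) n) = fun _ => (1:ℝ) := by
      funext n
      simp only [pow_zero]
      exact Aav_const z 1 n
    rw [h1]
    exact tendsto_const_nhds
  | succ k =>
    set g : ℝ → ℝ := fun u => ((k:ℝ)+1) * u ^ k with hg
    have hgc : Continuous g := by rw [hg]; fun_prop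
    -- layer-cake identity for a single point
    have hpt : ∀ x ∈ Set.Icc (0:ℝ) 1,
        x ^ (k+1) = ∫ u in Set.Ioc (0:ℝ) 1, (Set.Ioo 0 x).indicator g u := by
      intro x hx
      rw [setIntegral_indicator measurableSet_Ioo]
      have hsub : Set.Ioc (0:ℝ) 1 ∩ Set.Ioo 0 x = Set.Ioo 0 x := by
        apply Set.inter_eq_self_of_subset_right
        intro u hu
        exact ⟨hu.1, le_trans hu.2.le hx.2⟩
      rw [hsub, ← integral_Ioc_eq_integral_Ioo, ← intervalIntegral.integral_of_le hx.1]
      rw [hg, intervalIntegral.integral_const_mul, integral_pow]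
      have hne : (k:ℝ) + 1 ≠ 0 := by positivity
      field_simp
      simp
    -- integrability of the indicator integrands
    have hgint : IntegrableOn g (Set.Ioc (0:ℝ) 1) := by
      apply Continuous.integrableOn_Ioc hgc
    -- per-n identity
    have hn : ∀ n, Aav z (fun x => x ^ (k+1)) n
        = ∫ u in Set.Ioc (0:ℝ) 1, (1 - Qit n (hind z) u) * g u := by
      intro n
      have h1 : Aav z (fun x => x ^ (k+1)) n
          = (∑ b : Fin n → Bool,
              ∫ u in Set.Ioc (0:ℝ) 1, (Set.Ioo 0 (psiF z n b)).indicator g u) / 2 ^ n := by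
        unfold Aav
        congr 1
        exact Finset.sum_congr rfl fun b _ => hpt _ (psiF_mem hzI n b)
      rw [h1, ← integral_finset_sum _ (fun b _ => hgint.indicator measurableSet_Ioo),
        ← integral_div]
      apply setIntegral_congr_fun measurableSet_Ioc
      intro u hu
      have hu01 : u ∈ Set.Icc (0:ℝ) 1 := ⟨hu.1.le, hu.2⟩
      have hQ : Qit n (hind z) u
          = (∑ b : Fin n → Bool, if psiF z n b ≤ u then (1:ℝ) else 0) / 2 ^ n := by
        rw [← Aav_ind_eq_Qit hzI n u hu01]
        rfl
      show (∑ b : Fin n → Bool, (Set.Ioo 0 (psiF z n b)).indicator g u) / 2 ^ n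
          = (1 - Qit n (hind z) u) * g u
      have hterm : ∀ b : Fin n → Bool, (Set.Ioo 0 (psiF z n b)).indicator g u
          = g u - g u * (if psiF z n b ≤ u then (1:ℝ) else 0) := by
        intro b
        by_cases hbu : psiF z n b ≤ u
        · rw [Set.indicator_of_notMem (by simp [Set.mem_Ioo]; intro _; linarith), if_pos hbu]
          ring
        · rw [Set.indicator_of_mem (Set.mem_Ioo.mpr ⟨hu.1, not_le.mp hbu⟩), if_neg hbu]
          ring
      rw [Finset.sum_congr rfl fun b _ => hterm b, Finset.sum_sub_distrib,
        Finset.sum_const, Finset.card_univ, ← Finset.mul_sum]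
      have hcard : (Fintype.card (Fin n → Bool) : ℝ) = 2 ^ n := by simp [Fintype.card_fun]
      rw [nsmul_eq_mul, hcard, hQ]
      have h2n : (2:ℝ) ^ n ≠ 0 := by positivity
      field_simp
    -- dominated convergence
    have hb01 : ∀ n u, u ∈ Set.Icc (0:ℝ) 1 →
        0 ≤ Qit n (hind z) u ∧ Qit n (hind z) u ≤ 1 := by
      intro n u hu
      constructor
      · have h0 : ∀ x ∈ Set.Icc (0:ℝ) 1, (fun _ : ℝ => (0:ℝ)) x ≤ hind z x := by
          intro x _; unfold hind; split <;> norm_num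
        have := Qit_le h0 n u hu
        rwa [Qit_const] at this
      · have h0 : ∀ x ∈ Set.Icc (0:ℝ) 1, hind z x ≤ (fun _ : ℝ => (1:ℝ)) x := by
          intro x _; unfold hind; split <;> norm_num
        have := Qit_le h0 n u hu
        rwa [Qit_const] at this
    have hconv : Tendsto (fun n => ∫ u in Set.Ioc (0:ℝ) 1, (1 - Qit n (hind z) u) * g u)
        atTop (nhds (∫ u in Set.Ioc (0:ℝ) 1, (1 - u) * g u)) := by
      apply tendsto_integral_of_dominated_convergence (bound := fun _ => ((k:ℝ)+1))
      · intro n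
        exact ((measurable_const.sub (Qit_measurable (hind_measurable z) n)).mul
          hgc.measurable).aestronglyMeasurable
      · exact (integrableOn_const_iff).mpr (Or.inr measure_Ioc_lt_top)
      · intro n
        apply (ae_restrict_iff' measurableSet_Ioc).mpr
        apply Filter.Eventually.of_forall
        intro u hu
        have hu01 : u ∈ Set.Icc (0:ℝ) 1 := ⟨hu.1.le, hu.2⟩
        obtain ⟨hQ0, hQ1⟩ := hb01 n u hu01
        rw [norm_mul, Real.norm_eq_abs, Real.norm_eq_abs]
        have h1 : |1 - Qit n (hind z) u| ≤ 1 := by rw [abs_le]; constructor <;> linarith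
        have h2 : |g u| ≤ (k:ℝ)+1 := by
          rw [hg, abs_mul, abs_of_nonneg (show (0:ℝ) ≤ (k:ℝ)+1 by positivity)]
          have h3 : |u ^ k| ≤ 1 := by
            rw [abs_pow]
            apply pow_le_one₀ (abs_nonneg u)
            rw [abs_le]; constructor <;> linarith [hu01.1, hu01.2]
          nlinarith
        nlinarith [abs_nonneg (g u), abs_nonneg (1 - Qit n (hind z) u)]
      · apply (ae_restrict_iff' measurableSet_Ioc).mpr
        apply Filter.Eventually.of_forall
        intro u hu
        exact ((Qit_hind_tendsto hz ⟨hu.1.le, hu.2⟩).const_sub 1).mul_const (g u)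
    -- identify the limit
    have hlim : (∫ u in Set.Ioc (0:ℝ) 1, (1 - u) * g u)
        = ∫ x in Set.Icc (0:ℝ) 1, x ^ (k+1) := by
      rw [integral_Icc_eq_integral_Ioc,
        ← intervalIntegral.integral_of_le (by norm_num : (0:ℝ) ≤ 1),
        ← intervalIntegral.integral_of_le (by norm_num : (0:ℝ) ≤ 1)]
      have h1 : ∀ u ∈ Set.uIcc (0:ℝ) 1,
          (1-u) * g u = ((k:ℝ)+1) * u^k - ((k:ℝ)+1) * u^(k+1) := by
        intro u _; rw [hg]; ring
      rw [intervalIntegral.integral_congr h1,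
        intervalIntegral.integral_sub (f := fun u : ℝ => ((k:ℝ)+1) * u^k)
          (g := fun u : ℝ => ((k:ℝ)+1) * u^(k+1))
          ((continuous_const.mul (continuous_pow k)).intervalIntegrable 0 1)
          ((continuous_const.mul (continuous_pow (k+1))).intervalIntegrable 0 1),
        intervalIntegral.integral_const_mul, intervalIntegral.integral_const_mul,
        integral_pow, integral_pow]
      have hne1 : (k:ℝ) + 1 ≠ 0 := by positivity
      have hne2 : (k:ℝ) + 2 ≠ 0 := by positivity
      push_cast
      field_simp
      simp only [one_pow, ne_eq, Nat.add_eq_zero_iff, one_ne_zero, and_false, not_false_eq_true,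
        zero_pow, sub_zero]
      ring
    rw [← hlim]
    exact Tendsto.congr (fun n => (hn n).symm) hconv

/-! ### Final assembly -/

lemma Aav_poly_tendsto {z : ℝ} (hz : z ∈ Set.Ioo (0:ℝ) 1) (p : Polynomial ℝ) :
    Tendsto (fun n => Aav z (fun x => p.eval x) n) atTop
      (nhds (∫ x in Set.Icc (0:ℝ) 1, p.eval x)) := by
  have hev : (fun x : ℝ => p.eval x)
      = fun x => ∑ i ∈ Finset.range (p.natDegree + 1), p.coeff i * x ^ i := by
    funext x
    exact p.eval_eq_sum_range x
  have h1 : ∀ n, Aav z (fun x => p.eval x) n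
      = ∑ i ∈ Finset.range (p.natDegree + 1), p.coeff i * Aav z (fun x => x ^ i) n := by
    intro n
    rw [hev, Aav_finset_sum]
    exact Finset.sum_congr rfl fun i _ => Aav_mul z _ _ n
  have h2 : (∫ x in Set.Icc (0:ℝ) 1, p.eval x)
      = ∑ i ∈ Finset.range (p.natDegree + 1),
          p.coeff i * ∫ x in Set.Icc (0:ℝ) 1, x ^ i := by
    calc (∫ x in Set.Icc (0:ℝ) 1, p.eval x)
        = ∫ x in Set.Icc (0:ℝ) 1,
            ∑ i ∈ Finset.range (p.natDegree + 1), p.coeff i * x ^ i := by rw [hev]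
      _ = ∑ i ∈ Finset.range (p.natDegree + 1),
            ∫ x in Set.Icc (0:ℝ) 1, p.coeff i * x ^ i := by
          apply integral_finset_sum
          intro i _
          exact (continuous_const.mul (continuous_pow i)).integrableOn_Icc
      _ = ∑ i ∈ Finset.range (p.natDegree + 1),
            p.coeff i * ∫ x in Set.Icc (0:ℝ) 1, x ^ i := by
          exact Finset.sum_congr rfl fun i _ => MeasureTheory.integral_const_mul _ _
  rw [h2]
  apply Tendsto.congr (fun n => (h1 n).symm)
  exact tendsto_finset_sum _ fun i _ => (Aav_pow_tendsto hz i).const_mul (p.coeff i)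

lemma Aav_tendsto {z : ℝ} (hz : z ∈ Set.Ioo (0:ℝ) 1) (f : ℝ → ℝ)
    (hf : Continuous f) :
    Tendsto (fun n => Aav z f n) atTop (nhds (∫ x in Set.Icc (0:ℝ) 1, f x)) := by
  have hzI : z ∈ Set.Icc (0:ℝ) 1 := ⟨hz.1.le, hz.2.le⟩
  rw [Metric.tendsto_atTop]
  intro ε hε
  obtain ⟨p, hp⟩ := exists_polynomial_near_of_continuousOn 0 1 f hf.continuousOn (ε/4)
    (by linarith)
  have hpoly := Aav_poly_tendsto hz p
  rw [Metric.tendsto_atTop] at hpoly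
  obtain ⟨N, hN⟩ := hpoly (ε/4) (by linarith)
  refine ⟨N, fun n hn => ?_⟩
  have h1 : |Aav z f n - Aav z (fun x => p.eval x) n| ≤ ε/4 := by
    rw [← Aav_sub]
    apply Aav_abs_le hzI (B := ε/4) ?_ n
    intro x hx
    have := hp x hx
    rw [abs_sub_comm]
    linarith
  have hfi : IntegrableOn f (Set.Icc (0:ℝ) 1) := hf.integrableOn_Icc
  have hpi : IntegrableOn (fun x => p.eval x) (Set.Icc (0:ℝ) 1) :=
    p.continuous_aeval.integrableOn_Icc
  have h2 : |(∫ x in Set.Icc (0:ℝ) 1, p.eval x) - ∫ x in Set.Icc (0:ℝ) 1, f x| ≤ ε/4 := by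
    rw [← integral_sub hpi hfi]
    have hb : ∀ x ∈ Set.Icc (0:ℝ) 1, ‖p.eval x - f x‖ ≤ ε/4 := by
      intro x hx
      rw [Real.norm_eq_abs]
      exact (hp x hx).le
    have := norm_setIntegral_le_of_norm_le_const (μ := volume)
      (s := Set.Icc (0:ℝ) 1) (f := fun x => p.eval x - f x)
      (by rw [Real.volume_Icc]; exact ENNReal.ofReal_lt_top) hb
    rw [Real.volume_real_Icc] at this
    simp only [Real.norm_eq_abs] at this
    calc |∫ x in Set.Icc (0:ℝ) 1, (p.eval x - f x)|
        ≤ ε/4 * max (1 - 0) 0 := this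
      _ = ε/4 := by norm_num
  have h3 := hN n hn
  rw [Real.dist_eq] at h3 ⊢
  have hdec : Aav z f n - ∫ x in Set.Icc (0:ℝ) 1, f x
      = (Aav z f n - Aav z (fun x => p.eval x) n)
        + (Aav z (fun x => p.eval x) n - ∫ x in Set.Icc (0:ℝ) 1, p.eval x)
        + ((∫ x in Set.Icc (0:ℝ) 1, p.eval x) - ∫ x in Set.Icc (0:ℝ) 1, f x) := by ring
  rw [hdec]
  calc |_ + _ + _| ≤ |_ + _| + |_| := abs_add_le _ _
    _ ≤ |Aav z f n - Aav z (fun x => p.eval x) n|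
        + |Aav z (fun x => p.eval x) n - ∫ x in Set.Icc (0:ℝ) 1, p.eval x|
        + |(∫ x in Set.Icc (0:ℝ) 1, p.eval x) - ∫ x in Set.Icc (0:ℝ) 1, f x| := by
          have := abs_add_le (Aav z f n - Aav z (fun x => p.eval x) n)
            (Aav z (fun x => p.eval x) n - ∫ x in Set.Icc (0:ℝ) 1, p.eval x)
          linarith
    _ < ε := by linarith

lemma integral_eq_Aav (μ : Measure (ℕ → Bool)) [IsProbabilityMeasure μ]
    (hμ : IsBernoulliHalf μ) (z : ℝ) (f : ℝ → ℝ) (n : ℕ) :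
    ∫ ω, f (psi z n ω) ∂μ = Aav z f n := by
  classical
  set C : (Fin n → Bool) → Set (ℕ → Bool) := fun b => {ω | ∀ i : Fin n, ω i = b i} with hC
  have hCmeas : ∀ b, MeasurableSet (C b) := by
    intro b
    have : C b = ⋂ i : Fin n, (fun ω : ℕ → Bool => ω (i : ℕ)) ⁻¹' {b i} := by
      ext ω; simp [hC, Set.mem_iInter]
    rw [this]
    exact MeasurableSet.iInter fun i =>
      (measurable_pi_apply (i : ℕ)) (measurableSet_singleton (b i))
  have hpt : ∀ ω, f (psi z n ω)
      = ∑ b : Fin n → Bool, (C b).indicator (fun _ => f (psiF z n b)) ω := by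
    intro ω
    rw [Finset.sum_eq_single (fun i : Fin n => ω i)]
    · rw [Set.indicator_of_mem (by simp [hC]) ]
      rw [psi_eq_psiF]
    · intro b _ hb
      apply Set.indicator_of_notMem
      simp only [hC, Set.mem_setOf_eq]
      intro hmem
      exact hb (funext fun i => (hmem i).symm)
    · intro h
      exact absurd (Finset.mem_univ _) h
  calc ∫ ω, f (psi z n ω) ∂μ
      = ∫ ω, ∑ b : Fin n → Bool, (C b).indicator (fun _ => f (psiF z n b)) ω ∂μ := by
        congr 1; funext ω; exact hpt ω
    _ = ∑ b : Fin n → Bool, ∫ ω, (C b).indicator (fun _ => f (psiF z n b)) ω ∂μ := by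
        apply integral_finset_sum
        intro b _
        exact (integrable_const _).indicator (hCmeas b)
    _ = ∑ b : Fin n → Bool, (μ (C b)).toReal • f (psiF z n b) := by
        apply Finset.sum_congr rfl
        intro b _
        exact integral_indicator_const _ (hCmeas b)
    _ = Aav z f n := by
        unfold Aav
        rw [Finset.sum_div]
        apply Finset.sum_congr rfl
        intro b _
        rw [hμ n b]
        rw [show ((2:ENNReal)⁻¹ ^ n).toReal = ((2:ℝ)⁻¹) ^ n by
          rw [ENNReal.toReal_pow, ENNReal.toReal_inv]; norm_num]
        rw [smul_eq_mul]
        field_simp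
        rw [mul_right_comm, ← mul_pow]; norm_num

/-- Weak convergence of the law of `ψ_{ω_n}(z)` to the uniform distribution on `[0,1]`,
expressed via convergence of integrals of bounded continuous functions. -/
theorem stmt11 (μ : Measure (ℕ → Bool)) [IsProbabilityMeasure μ] (hμ : IsBernoulliHalf μ)
    (z : ℝ) (hz : z ∈ Set.Ioo (0:ℝ) 1) :
    ∀ f : BoundedContinuousFunction ℝ ℝ,
      Tendsto (fun n : ℕ => ∫ ω, f (psi z n ω) ∂μ) atTop
        (nhds (∫ x in Set.Icc (0:ℝ) 1, f x)) := by
  intro f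
  have := Aav_tendsto hz f f.continuous
  simpa only [integral_eq_Aav μ hμ z f] using this
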